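/- Every polynomial vector field of degree at most k−1 on ℝ^d decomposes uniquely as the sum of a gradient of a polynomial of degree at most k and a vector field v of degree at most k−1 satisfying v(x)·x = 0 for all x; that is, ℙ_{k−1}(ℝ^d; ℝ^d) = grad ℙ_k(ℝ^d) ⊕ (ker(·x) ∩ ℙ_{k−1}(ℝ^d; ℝ^d)). -/
import Mathlib


open MvPolynomial Finset

lemma finsupp_sum_eq {d : ℕ} (u : Fin d →₀ ℕ) :
    (u.sum fun _ n => n) = ∑ j : Fin d, u j :=
  Finsupp.sum_fintype _ _ (fun _ => rfl)

lemma euler_monomial {d : ℕ} (s : Fin d →₀ ℕ) (a : ℝ) :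
    ∑ i : Fin d, X i * pderiv i (monomial s a) = (∑ j : Fin d, s j) • monomial s a := by
  rw [Finset.sum_smul]
  refine Finset.sum_congr rfl fun i _ => ?_
  rw [pderiv_monomial]
  rcases Nat.eq_zero_or_pos (s i) with h | h
  · simp [h]
  · have hle : Finsupp.single i 1 ≤ s := by
      rw [Finsupp.single_le_iff]; exact h
    rw [X, monomial_mul, one_mul, add_tsub_cancel_of_le hle]
    rw [smul_monomial]
    congr 1
    push_cast
    ring

lemma euler_apply {d : ℕ} (f : MvPolynomial (Fin d) ℝ) :
    ∑ i : Fin d, X i * pderiv i f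
      = ∑ u ∈ f.support, (∑ j : Fin d, u j) • monomial u (coeff u f) := by
  conv_lhs => rw [← support_sum_monomial_coeff f]
  have : ∀ i : Fin d, X i * pderiv i (∑ u ∈ f.support, monomial u (coeff u f))
      = ∑ u ∈ f.support, X i * pderiv i (monomial u (coeff u f)) := by
    intro i; rw [map_sum, Finset.mul_sum]
  simp_rw [this]
  rw [Finset.sum_comm]
  exact Finset.sum_congr rfl fun u _ => euler_monomial u (coeff u f)

lemma coeff_euler {d : ℕ} (f : MvPolynomial (Fin d) ℝ) (s : Fin d →₀ ℕ) :
    coeff s (∑ i : Fin d, X i * pderiv i f) = (∑ j : Fin d, s j) * coeff s f := by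
  rw [euler_apply, coeff_sum]
  have hterm : ∀ u : Fin d →₀ ℕ, u ≠ s →
      coeff s ((∑ j : Fin d, u j) • monomial u (coeff u f)) = 0 := by
    intro u hus
    rw [coeff_smul, coeff_monomial, if_neg hus, smul_zero]
  by_cases hs : s ∈ f.support
  · rw [Finset.sum_eq_single s (fun u _ hus => hterm u hus) (by tauto)]
    rw [coeff_smul, coeff_monomial, if_pos rfl, nsmul_eq_mul]
  · rw [Finset.sum_eq_zero fun u hu => hterm u (fun h => hs (h ▸ hu)),
      MvPolynomial.notMem_support_iff.mp hs, mul_zero]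

lemma grad_eq_zero {d : ℕ} (f : MvPolynomial (Fin d) ℝ)
    (h : ∑ i : Fin d, X i * pderiv i f = 0) (i : Fin d) : pderiv i f = 0 := by
  have hf : f = C (coeff 0 f) := by
    ext s
    by_cases hs : s = 0
    · subst hs; simp
    · have h1 : (↑(∑ j : Fin d, s j) : ℝ) * coeff s f = 0 := by
        rw [← coeff_euler, h, coeff_zero]
      have h2 : ∑ j : Fin d, s j ≠ 0 := by
        intro hz
        apply hs
        ext j
        have := Finset.sum_eq_zero_iff.mp hz j (Finset.mem_univ j)
        simp [this]
      have : coeff s f = 0 := by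
        rcases mul_eq_zero.mp h1 with h' | h'
        · exact absurd (Nat.cast_eq_zero.mp h') h2
        · exact h'
      rw [this, coeff_C, if_neg (Ne.symm hs)]
  rw [hf, pderiv_C]

lemma tdeg_pderiv_le {d : ℕ} (f : MvPolynomial (Fin d) ℝ) (i : Fin d) :
    (pderiv i f).totalDegree ≤ f.totalDegree - 1 := by
  conv_lhs => rw [← support_sum_monomial_coeff f, map_sum]
  refine (totalDegree_finset_sum _ _).trans (Finset.sup_le fun u hu => ?_)
  rw [pderiv_monomial]
  rcases Nat.eq_zero_or_pos (u i) with h | h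
  · simp [h]
  · refine (totalDegree_monomial_le _ _).trans ?_
    have hsum : ((u - Finsupp.single i 1).sum fun _ n => n) = (∑ j : Fin d, u j) - 1 := by
      rw [finsupp_sum_eq]
      simp_rw [Finsupp.tsub_apply]
      rw [← Finset.add_sum_erase _ _ (Finset.mem_univ i),
        ← Finset.add_sum_erase _ u (Finset.mem_univ i)]
      have hrest : ∀ j ∈ Finset.univ.erase i, u j - Finsupp.single i 1 j = u j := by
        intro j hj
        rw [Finsupp.single_apply, if_neg (Finset.ne_of_mem_erase hj).symm, Nat.sub_zero]
      rw [Finset.sum_congr rfl hrest, Finsupp.single_apply, if_pos rfl]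
      have hre : ((Finset.univ.erase i).sum fun j => u j) = (Finset.univ.erase i).sum ⇑u := rfl
      omega
    have h2 := le_totalDegree hu
    rw [finsupp_sum_eq] at h2
    calc ((u - Finsupp.single i 1).sum fun _ n => n) = (∑ j : Fin d, u j) - 1 := hsum
      _ ≤ f.totalDegree - 1 := by omega

/-- Every polynomial vector field of degree at most `k-1` on `ℝ^d` decomposes uniquely as
the sum of the gradient of a polynomial of degree at most `k` and a vector field `w` of
degree at most `k-1` with `w(x)·x ≡ 0`:
`ℙ_{k−1}(ℝ^d; ℝ^d) = grad ℙ_k(ℝ^d) ⊕ (ker(·x) ∩ ℙ_{k−1}(ℝ^d; ℝ^d))`. -/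
theorem stmt_4 (d k : ℕ) (hd : 1 ≤ d) (hk : 1 ≤ k)
    (v : Fin d → MvPolynomial (Fin d) ℝ) (hv : ∀ i, (v i).totalDegree ≤ k - 1) :
    ∃! gw : (Fin d → MvPolynomial (Fin d) ℝ) × (Fin d → MvPolynomial (Fin d) ℝ),
      (∃ p : MvPolynomial (Fin d) ℝ, p.totalDegree ≤ k ∧ gw.1 = fun i => pderiv i p) ∧
      (∀ i, (gw.2 i).totalDegree ≤ k - 1) ∧
      (∑ i : Fin d, X i * gw.2 i = 0) ∧
      v = gw.1 + gw.2 := by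
  set q : MvPolynomial (Fin d) ℝ := ∑ i : Fin d, X i * v i with hq
  have hq0 : coeff 0 q = 0 := by
    have : constantCoeff q = 0 := by
      rw [hq, map_sum]
      exact Finset.sum_eq_zero fun i _ => by rw [map_mul, constantCoeff_X, zero_mul]
    rwa [constantCoeff_eq] at this
  have hqdeg : q.totalDegree ≤ k := by
    rw [hq]
    refine (totalDegree_finset_sum _ _).trans (Finset.sup_le fun i _ => ?_)
    refine (totalDegree_mul _ _).trans ?_
    have := hv i
    rw [totalDegree_X]
    omega
  set p : MvPolynomial (Fin d) ℝ :=
    ∑ u ∈ q.support, monomial u (coeff u q / (∑ j : Fin d, u j)) with hp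
  have hune : ∀ u ∈ q.support, (∑ j : Fin d, u j) ≠ 0 := by
    intro u hu hz
    have hu0 : u = 0 := by
      ext j
      have := Finset.sum_eq_zero_iff.mp hz j (Finset.mem_univ j)
      simp [this]
    exact MvPolynomial.mem_support_iff.mp hu (hu0 ▸ hq0)
  have hEp : ∑ i : Fin d, X i * pderiv i p = q := by
    have expand : ∀ i : Fin d, X i * pderiv i p
        = ∑ u ∈ q.support, X i * pderiv i (monomial u (coeff u q / (∑ j : Fin d, u j))) := by
      intro i; rw [hp, map_sum, Finset.mul_sum]
    simp_rw [expand]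
    rw [Finset.sum_comm]
    have : ∀ u ∈ q.support,
        (∑ i : Fin d, X i * pderiv i (monomial u (coeff u q / (∑ j : Fin d, u j))))
          = monomial u (coeff u q) := by
      intro u hu
      rw [euler_monomial, smul_monomial, nsmul_eq_mul, mul_comm,
        div_mul_cancel₀ _ (Nat.cast_ne_zero.mpr (hune u hu))]
    rw [Finset.sum_congr rfl this, support_sum_monomial_coeff]
  have hpdeg : p.totalDegree ≤ k := by
    rw [hp]
    refine (totalDegree_finset_sum _ _).trans (Finset.sup_le fun u hu => ?_)
    exact (totalDegree_monomial_le _ _).trans ((le_totalDegree hu).trans hqdeg)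
  have hgdeg : ∀ i : Fin d, (pderiv i p).totalDegree ≤ k - 1 := fun i =>
    (tdeg_pderiv_le p i).trans (by omega)
  refine ⟨⟨fun i => pderiv i p, fun i => v i - pderiv i p⟩,
    ⟨⟨p, hpdeg, rfl⟩, ?_, ?_, ?_⟩, ?_⟩
  · intro i
    exact (totalDegree_sub _ _).trans (max_le (hv i) (hgdeg i))
  · have : ∀ i : Fin d, X i * (v i - pderiv i p) = X i * v i - X i * pderiv i p := fun i =>
      mul_sub _ _ _
    simp_rw [this]
    rw [Finset.sum_sub_distrib, ← hq, hEp, sub_self]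
  · funext i
    simp
  · rintro ⟨g', w'⟩ ⟨⟨p', hp'deg, hg'⟩, hw'deg, hw'sum, hvw'⟩
    have hkey : ∀ i : Fin d, pderiv i (p' - p) = 0 := by
      apply grad_eq_zero
      have expand2 : ∀ i : Fin d, X i * pderiv i (p' - p)
          = X i * pderiv i p' - X i * pderiv i p := by
        intro i; rw [map_sub, mul_sub]
      simp_rw [expand2]
      rw [Finset.sum_sub_distrib, hEp]
      have hg'i : ∀ i : Fin d, pderiv i p' = v i - w' i := by
        intro i
        have := congrFun hvw' i
        rw [Pi.add_apply, hg'] at this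
        simp only at this
        rw [this]; ring
      simp_rw [hg'i]
      have : ∀ i : Fin d, X i * (v i - w' i) = X i * v i - X i * w' i := fun i => mul_sub _ _ _
      simp_rw [this]
      rw [Finset.sum_sub_distrib, hw'sum, sub_zero, ← hq, sub_self]
    have hgeq : g' = fun i => pderiv i p := by
      funext i
      have h2 : g' i = pderiv i p' := congrFun hg' i
      have h3 := hkey i
      rw [map_sub, sub_eq_zero] at h3
      rw [h2, h3]
    refine Prod.ext hgeq ?_
    funext i
    have h3 : v i = g' i + w' i := congrFun hvw' i
    have hgi : g' i = pderiv i p := congrFun hgeq i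
    show w' i = v i - pderiv i p
    rw [h3, hgi]; ring
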